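/- The IMSPE criterion for one existing data point at x = 1, a squared exponential kernel with unit lengthscale and unit variance, and standard Gaussian weighting measure, evaluated at a candidate point x_*, equals 1 - (1/(1 - exp(-(1-x_*)²)))·((1/√3)exp(-x_*²/3) + (1/√3)exp(-1/3) - (2/√3)exp(-(5x_*² - 8x_* + 5)/6)). -/

import Mathlib

open MeasureTheory Real Matrix

lemma gauss_shift_int (m : ℝ) :
    ∫ x : ℝ, Real.exp (-(3/2) * (x - m)^2) = Real.sqrt (2*π) / Real.sqrt 3 := by
  rw [integral_sub_right_eq_self (μ := volume) (fun x => Real.exp (-(3/2) * x^2)) m,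
    integral_gaussian]
  rw [show π / (3/2) = 2*π/3 by ring, Real.sqrt_div (by positivity) 3]

lemma gauss_shift_integrable (m : ℝ) :
    Integrable (fun x : ℝ => Real.exp (-(3/2) * (x - m)^2)) := by
  exact Integrable.comp_sub_right (integrable_exp_neg_mul_sq (by norm_num)) m

lemma gauss_half_int : ∫ x : ℝ, Real.exp (-(1/2) * x^2) = Real.sqrt (2*π) := by
  rw [integral_gaussian]
  congr 1; ring

lemma gauss_half_integrable : Integrable (fun x : ℝ => Real.exp (-(1/2) * x^2)) :=
  integrable_exp_neg_mul_sq (by norm_num)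

set_option maxHeartbeats 1000000 in
/-- The IMSPE criterion for one existing data point at `x = 1`, squared exponential
kernel with unit lengthscale and unit signal variance, and standard Gaussian
weighting measure, evaluated in closed form at a candidate point `x_*`. -/
theorem imspe_motivating_example (xstar : ℝ) (hx : xstar ≠ 1)
    (k : ℝ → ℝ → ℝ) (hk : k = fun a b => Real.exp (-(a - b) ^ 2 / 2))
    (M : Matrix (Fin 2) (Fin 2) ℝ)
    (hM : M = !![k xstar xstar, k xstar 1; k 1 xstar, k 1 1])
    (post : ℝ → ℝ)
    (hpost : post = fun xr =>
      k xr xr - dotProduct ![k xr xstar, k xr 1] (M⁻¹.mulVec ![k xr xstar, k xr 1])) :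
    ∫ xr : ℝ, post xr * (1 / Real.sqrt (2 * π) * Real.exp (-xr ^ 2 / 2)) =
      1 - 1 / (1 - Real.exp (-(1 - xstar) ^ 2)) *
        (1 / Real.sqrt 3 * Real.exp (-xstar ^ 2 / 3) +
          1 / Real.sqrt 3 * Real.exp (-1 / 3) -
          2 / Real.sqrt 3 * Real.exp (-(5 * xstar ^ 2 - 8 * xstar + 5) / 6)) := by
  have h2pi : (0:ℝ) < Real.sqrt (2*π) := Real.sqrt_pos.mpr (by positivity)
  have h3 : (0:ℝ) < Real.sqrt 3 := Real.sqrt_pos.mpr (by norm_num)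
  set e : ℝ := Real.exp (-(1 - xstar)^2 / 2) with he
  have hesq : e^2 = Real.exp (-(1 - xstar)^2) := by
    rw [he, sq, ← Real.exp_add]; congr 1; ring
  have hsub : (1 - xstar) ≠ 0 := sub_ne_zero.mpr (Ne.symm hx)
  have hlt : e^2 < 1 := by
    rw [hesq, Real.exp_lt_one_iff]
    have : 0 < (1 - xstar)^2 := by positivity
    linarith
  have hne : 1 - e^2 ≠ 0 := by
    have : 0 < e^2 := by positivity
    intro h; nlinarith
  have h11 : k xstar xstar = 1 := by rw [hk]; simp
  have h12 : k xstar 1 = e := by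
    simp only [hk, he]; exact Real.exp_eq_exp.mpr (by ring)
  have h21 : k 1 xstar = e := by simp only [hk, he]
  have h22 : k 1 1 = 1 := by rw [hk]; simp
  have hMinv : M⁻¹ = (1 - e^2)⁻¹ • !![(1:ℝ), -e; -e, 1] := by
    apply Matrix.inv_eq_right_inv
    rw [hM, h11, h12, h21, h22]
    ext i j
    fin_cases i <;> fin_cases j <;>
      simp [Matrix.mul_apply, Fin.sum_univ_two, Matrix.one_apply] <;>
      field_simp <;> ring
  have hpt : ∀ xr : ℝ,
      post xr * (1 / Real.sqrt (2 * π) * Real.exp (-xr ^ 2 / 2)) =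
        1 / Real.sqrt (2*π) * Real.exp (-(1/2) * xr^2)
        - (1 - e^2)⁻¹ *
          ( 1 / Real.sqrt (2*π) *
              (Real.exp (-xstar^2/3) * Real.exp (-(3/2) * (xr - 2*xstar/3)^2))
          + 1 / Real.sqrt (2*π) *
              (Real.exp (-1/3) * Real.exp (-(3/2) * (xr - 2/3)^2))
          - 2 * (1 / Real.sqrt (2*π) *
              (Real.exp (-(5*xstar^2 - 8*xstar + 5)/6) * Real.exp (-(3/2) * (xr - (xstar+1)/3)^2)))) := by
    intro xr
    rw [hpost]
    simp only [hk, hMinv]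
    simp only [Matrix.smul_mulVec, Matrix.mulVec, dotProduct,
      Fin.sum_univ_two, Matrix.smul_apply, Matrix.of_apply, Matrix.cons_val', Matrix.cons_val_zero,
      Matrix.cons_val_one, Matrix.head_cons, Matrix.head_fin_const, Matrix.empty_val',
      Matrix.cons_val_fin_one, Pi.smul_apply, smul_eq_mul]
    have e0 : Real.exp (-(xr - xr)^2 / 2) = 1 := by simp
    have e1 : Real.exp (-(1/2) * xr^2) = Real.exp (-xr^2/2) := by congr 1; ring
    have e2 : Real.exp (-xstar^2/3) * Real.exp (-(3/2) * (xr - 2*xstar/3)^2)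
        = Real.exp (-(xr - xstar)^2/2) * Real.exp (-(xr - xstar)^2/2) * Real.exp (-xr^2/2) := by
      rw [← Real.exp_add, ← Real.exp_add, ← Real.exp_add]; congr 1; ring
    have e3 : Real.exp (-1/3) * Real.exp (-(3/2) * (xr - 2/3)^2)
        = Real.exp (-(xr - 1)^2/2) * Real.exp (-(xr - 1)^2/2) * Real.exp (-xr^2/2) := by
      rw [← Real.exp_add, ← Real.exp_add, ← Real.exp_add]; congr 1; ring
    have e4 : Real.exp (-(5*xstar^2 - 8*xstar + 5)/6) * Real.exp (-(3/2) * (xr - (xstar+1)/3)^2)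
        = Real.exp (-(1 - xstar)^2/2) * (Real.exp (-(xr - xstar)^2/2) *
            (Real.exp (-(xr - 1)^2/2) * Real.exp (-xr^2/2))) := by
      rw [← Real.exp_add, ← Real.exp_add, ← Real.exp_add, ← Real.exp_add]; congr 1; ring
    rw [e0, e1, e2, e3, e4, he]
    ring
  simp only [hpt]
  have i1 : Integrable (fun xr : ℝ => 1 / Real.sqrt (2*π) * Real.exp (-(1/2) * xr^2)) :=
    gauss_half_integrable.const_mul _
  have i2 : Integrable (fun xr : ℝ => 1 / Real.sqrt (2*π) *
      (Real.exp (-xstar^2/3) * Real.exp (-(3/2) * (xr - 2*xstar/3)^2))) := by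
    exact ((gauss_shift_integrable (2*xstar/3)).const_mul
      (Real.exp (-xstar^2/3))).const_mul (1 / Real.sqrt (2*π))
  have i3 : Integrable (fun xr : ℝ => 1 / Real.sqrt (2*π) *
      (Real.exp (-1/3) * Real.exp (-(3/2) * (xr - 2/3)^2))) := by
    exact ((gauss_shift_integrable (2/3)).const_mul
      (Real.exp (-1/3))).const_mul (1 / Real.sqrt (2*π))
  have i4 : Integrable (fun xr : ℝ => 2 * (1 / Real.sqrt (2*π) *
      (Real.exp (-(5*xstar^2 - 8*xstar + 5)/6) * Real.exp (-(3/2) * (xr - (xstar+1)/3)^2)))) := by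
    exact (((gauss_shift_integrable ((xstar+1)/3)).const_mul
      (Real.exp (-(5*xstar^2 - 8*xstar + 5)/6))).const_mul (1 / Real.sqrt (2*π))).const_mul 2
  have i23 : Integrable (fun xr : ℝ => 1 / Real.sqrt (2*π) *
      (Real.exp (-xstar^2/3) * Real.exp (-(3/2) * (xr - 2*xstar/3)^2))
      + 1 / Real.sqrt (2*π) * (Real.exp (-1/3) * Real.exp (-(3/2) * (xr - 2/3)^2))) :=
    i2.add i3
  have i234 : Integrable (fun xr : ℝ => 1 / Real.sqrt (2*π) *
      (Real.exp (-xstar^2/3) * Real.exp (-(3/2) * (xr - 2*xstar/3)^2))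
      + 1 / Real.sqrt (2*π) * (Real.exp (-1/3) * Real.exp (-(3/2) * (xr - 2/3)^2))
      - 2 * (1 / Real.sqrt (2*π) *
        (Real.exp (-(5*xstar^2 - 8*xstar + 5)/6) * Real.exp (-(3/2) * (xr - (xstar+1)/3)^2)))) :=
    i23.sub i4
  have i5 : Integrable (fun xr : ℝ => (1 - e^2)⁻¹ *
      (1 / Real.sqrt (2*π) * (Real.exp (-xstar^2/3) * Real.exp (-(3/2) * (xr - 2*xstar/3)^2))
      + 1 / Real.sqrt (2*π) * (Real.exp (-1/3) * Real.exp (-(3/2) * (xr - 2/3)^2))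
      - 2 * (1 / Real.sqrt (2*π) *
        (Real.exp (-(5*xstar^2 - 8*xstar + 5)/6) * Real.exp (-(3/2) * (xr - (xstar+1)/3)^2))))) :=
    i234.const_mul _
  rw [integral_sub i1 i5, integral_const_mul, integral_const_mul, integral_sub i23 i4,
    integral_add i2 i3]
  simp only [integral_const_mul, gauss_shift_int, gauss_half_int]
  rw [← hesq]
  field_simp
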